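/- Fix ω ≥ 1 and set h_j(ω) = Σ_{s=0}^{j-1} (4ω)^{-s} C(2s,s). Let (α_j)_{j≥1} be nonnegative reals with Σ_j j α_j = 1 and α_1 < 1. Then Σ_{i≥1} (1/4^{i-1}) C(2i-1, i-1) * i α_i / (ω^{i-1} h_i(ω)) < 1. In particular the quantity c = 4 / (1 − Σ_{i≥1} 4^{-(i-1)} C(2i-1,i-1) i α_i / (ω^{i-1} h_i(ω))) is a well-defined positive real number. -/

import Mathlib

/-- `h_j(ω) = ∑_{s=0}^{j-1} (4ω)^{-s} C(2s,s)`. -/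
noncomputable def hSeq (ω : ℝ) (j : ℕ) : ℝ :=
  ∑ s ∈ Finset.range j, ((4 * ω) ^ s)⁻¹ * (Nat.choose (2 * s) s : ℝ)

lemma sumS (i : ℕ) :
    ∑ s ∈ Finset.range (i + 1), ((4 : ℝ) ^ s)⁻¹ * (Nat.choose (2 * s) s : ℝ)
      = (2 * i + 1 : ℝ) * (Nat.centralBinom i : ℝ) / 4 ^ i := by
  induction i with
  | zero => simp [Nat.centralBinom]
  | succ n ih =>
    rw [Finset.sum_range_succ, ih]
    have h := Nat.succ_mul_centralBinom_succ n
    have h' : ((n : ℝ) + 1) * (Nat.centralBinom (n + 1) : ℝ)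
        = 2 * (2 * n + 1) * (Nat.centralBinom n : ℝ) := by
      exact_mod_cast congrArg (Nat.cast : ℕ → ℝ) h
    have hcb : (Nat.choose (2 * (n + 1)) (n + 1) : ℝ) = (Nat.centralBinom (n + 1) : ℝ) := by
      simp [Nat.centralBinom]
    rw [hcb]
    have h4 : (0 : ℝ) < (4 : ℝ) ^ n := by positivity
    push_cast
    field_simp
    linear_combination (-2 * (4:ℝ)^n) * h'

lemma choose_le (i : ℕ) : (Nat.choose (2 * i + 1) i : ℕ) ≤ (2 * i + 1) * Nat.centralBinom i := by
  cases i with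
  | zero => simp [Nat.centralBinom]
  | succ n =>
    have h1 : Nat.choose (2 * (n + 1) + 1) (n + 1)
        = Nat.choose (2 * (n + 1)) n + Nat.choose (2 * (n + 1)) (n + 1) :=
      Nat.choose_succ_succ _ _
    have h2 : Nat.choose (2 * (n + 1)) n ≤ Nat.centralBinom (n + 1) := by
      have := Nat.choose_le_middle n (2 * (n + 1))
      simpa [Nat.centralBinom, Nat.mul_div_cancel_left] using this
    have h3 : Nat.choose (2 * (n + 1)) (n + 1) = Nat.centralBinom (n + 1) := rfl
    have hcbpos : 1 ≤ Nat.centralBinom (n + 1) := Nat.centralBinom_pos _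
    have h4 : 2 * Nat.centralBinom (n + 1) ≤ (2 * (n + 1) + 1) * Nat.centralBinom (n + 1) :=
      Nat.mul_le_mul_right _ (by omega)
    omega

lemma choose_lt (n : ℕ) :
    (Nat.choose (2 * (n + 1) + 1) (n + 1) : ℕ) < (2 * (n + 1) + 1) * Nat.centralBinom (n + 1) := by
  have h1 : Nat.choose (2 * (n + 1) + 1) (n + 1)
      = Nat.choose (2 * (n + 1)) n + Nat.choose (2 * (n + 1)) (n + 1) :=
    Nat.choose_succ_succ _ _
  have h2 : Nat.choose (2 * (n + 1)) n ≤ Nat.centralBinom (n + 1) := by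
    have := Nat.choose_le_middle n (2 * (n + 1))
    simpa [Nat.centralBinom, Nat.mul_div_cancel_left] using this
  have h3 : Nat.choose (2 * (n + 1)) (n + 1) = Nat.centralBinom (n + 1) := rfl
  have hcbpos : 1 ≤ Nat.centralBinom (n + 1) := Nat.centralBinom_pos _
  have h4 : 2 * Nat.centralBinom (n + 1) < (2 * (n + 1) + 1) * Nat.centralBinom (n + 1) :=
    (Nat.mul_lt_mul_right (by omega)).mpr (by omega)
  omega

/-- `∑_{s≤i} 4^{-s} C(2s,s) ≤ ω^i h_{i+1}(ω)` for `ω ≥ 1`. -/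
lemma hSeq_lower (ω : ℝ) (hω : 1 ≤ ω) (i : ℕ) :
    ∑ s ∈ Finset.range (i + 1), ((4 : ℝ) ^ s)⁻¹ * (Nat.choose (2 * s) s : ℝ)
      ≤ ω ^ i * hSeq ω (i + 1) := by
  have hω0 : (0 : ℝ) < ω := lt_of_lt_of_le one_pos hω
  rw [hSeq, Finset.mul_sum]
  apply Finset.sum_le_sum
  intro s hs
  have hsi : s ≤ i := Nat.lt_succ_iff.mp (Finset.mem_range.mp hs)
  have hC : (0 : ℝ) ≤ (Nat.choose (2 * s) s : ℝ) := Nat.cast_nonneg _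
  have key : ((4 : ℝ) ^ s)⁻¹ ≤ ω ^ i * ((4 * ω) ^ s)⁻¹ := by
    rw [mul_pow, mul_inv, ← mul_assoc, mul_comm (ω ^ i), mul_assoc]
    have h1 : (1 : ℝ) ≤ ω ^ i * (ω ^ s)⁻¹ := by
      rw [← div_eq_mul_inv, le_div_iff₀ (pow_pos hω0 s)]
      simpa using pow_le_pow_right₀ hω hsi
    nlinarith [inv_pos.mpr (pow_pos (by norm_num : (0:ℝ) < 4) s)]
  calc ((4 : ℝ) ^ s)⁻¹ * (Nat.choose (2 * s) s : ℝ)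
      ≤ (ω ^ i * ((4 * ω) ^ s)⁻¹) * (Nat.choose (2 * s) s : ℝ) :=
        mul_le_mul_of_nonneg_right key hC
    _ = ω ^ i * (((4 * ω) ^ s)⁻¹ * (Nat.choose (2 * s) s : ℝ)) := by ring

noncomputable def termF (ω : ℝ) (α : ℕ → ℝ) (i : ℕ) : ℝ :=
  ((4 : ℝ) ^ i)⁻¹ * (Nat.choose (2 * i + 1) i : ℝ) * ((i + 1 : ℝ) * α (i + 1)) /
    (ω ^ i * hSeq ω (i + 1))

/-- Fix `ω ≥ 1` and nonnegative reals `(α_j)_{j≥1}` with `∑ j α_j = 1` and `α_1 < 1`.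
Then `∑_{i≥1} 4^{-(i-1)} C(2i-1,i-1) i α_i / (ω^{i-1} h_i(ω)) < 1` (the series being
summable); in particular `c = 4/(1 - Σ)` is a well-defined positive real.
(Here the sum over `i ≥ 1` is written as a sum over `i ∈ ℕ` of the term at `i+1`.) -/
theorem statement10 (ω : ℝ) (hω : 1 ≤ ω) (α : ℕ → ℝ) (hα : ∀ j, 0 ≤ α j)
    (hsum : HasSum (fun j : ℕ => (j : ℝ) * α j) 1) (hα1 : α 1 < 1) :
    Summable (fun i : ℕ =>
      ((4 : ℝ) ^ i)⁻¹ * (Nat.choose (2 * i + 1) i : ℝ) * ((i + 1 : ℝ) * α (i + 1)) /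
        (ω ^ i * hSeq ω (i + 1))) ∧
    (∑' i : ℕ,
      ((4 : ℝ) ^ i)⁻¹ * (Nat.choose (2 * i + 1) i : ℝ) * ((i + 1 : ℝ) * α (i + 1)) /
        (ω ^ i * hSeq ω (i + 1))) < 1 ∧
    0 < 4 / (1 - ∑' i : ℕ,
      ((4 : ℝ) ^ i)⁻¹ * (Nat.choose (2 * i + 1) i : ℝ) * ((i + 1 : ℝ) * α (i + 1)) /
        (ω ^ i * hSeq ω (i + 1))) := by
  have hω0 : (0 : ℝ) < ω := lt_of_lt_of_le one_pos hω
  set g : ℕ → ℝ := fun i => ((i : ℝ) + 1) * α (i + 1) with hg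
  -- positivity of denominator
  have hD : ∀ i : ℕ, 0 < ω ^ i * hSeq ω (i + 1) := by
    intro i
    apply mul_pos (pow_pos hω0 i)
    rw [hSeq]
    have h0 : ∀ s ∈ Finset.range (i + 1), 0 ≤ ((4 * ω) ^ s)⁻¹ * (Nat.choose (2 * s) s : ℝ) := by
      intro s _; positivity
    have hmem : (0 : ℕ) ∈ Finset.range (i + 1) := Finset.mem_range.mpr (Nat.succ_pos i)
    have := Finset.single_le_sum h0 hmem
    simpa using lt_of_lt_of_le one_pos (by simpa using this)
  -- numerator coefficient bound
  have hkey : ∀ i : ℕ, ((4 : ℝ) ^ i)⁻¹ * (Nat.choose (2 * i + 1) i : ℝ)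
      ≤ ω ^ i * hSeq ω (i + 1) := by
    intro i
    calc ((4 : ℝ) ^ i)⁻¹ * (Nat.choose (2 * i + 1) i : ℝ)
        ≤ ((4 : ℝ) ^ i)⁻¹ * ((2 * i + 1 : ℝ) * (Nat.centralBinom i : ℝ)) := by
          apply mul_le_mul_of_nonneg_left _ (by positivity)
          exact_mod_cast Nat.cast_le.mpr (choose_le i)
      _ = ∑ s ∈ Finset.range (i + 1), ((4 : ℝ) ^ s)⁻¹ * (Nat.choose (2 * s) s : ℝ) := by
          rw [sumS, div_eq_mul_inv]; ring
      _ ≤ ω ^ i * hSeq ω (i + 1) := hSeq_lower ω hω i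
  have hkey' : ∀ n : ℕ, ((4 : ℝ) ^ (n+1))⁻¹ * (Nat.choose (2 * (n+1) + 1) (n+1) : ℝ)
      < ω ^ (n+1) * hSeq ω (n + 2) := by
    intro n
    calc ((4 : ℝ) ^ (n+1))⁻¹ * (Nat.choose (2 * (n+1) + 1) (n+1) : ℝ)
        < ((4 : ℝ) ^ (n+1))⁻¹ * ((2 * (n+1) + 1 : ℝ) * (Nat.centralBinom (n+1) : ℝ)) := by
          apply mul_lt_mul_of_pos_left _ (by positivity)
          exact_mod_cast Nat.cast_lt.mpr (choose_lt n)
      _ = ∑ s ∈ Finset.range (n + 2), ((4 : ℝ) ^ s)⁻¹ * (Nat.choose (2 * s) s : ℝ) := by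
          rw [sumS, div_eq_mul_inv]; push_cast; ring
      _ ≤ ω ^ (n+1) * hSeq ω (n + 2) := hSeq_lower ω hω (n+1)
  -- termwise bounds
  have hterm_nonneg : ∀ i : ℕ, 0 ≤ termF ω α i := by
    intro i
    apply div_nonneg _ (le_of_lt (hD i))
    have := hα (i + 1)
    positivity
  have hterm_le : ∀ i : ℕ, termF ω α i ≤ g i := by
    intro i
    rw [termF, div_le_iff₀ (hD i)]
    have hgnn : 0 ≤ g i := by have := hα (i + 1); positivity
    calc ((4 : ℝ) ^ i)⁻¹ * (Nat.choose (2 * i + 1) i : ℝ) * (((i : ℝ) + 1) * α (i + 1))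
        ≤ (ω ^ i * hSeq ω (i + 1)) * (((i : ℝ) + 1) * α (i + 1)) :=
          mul_le_mul_of_nonneg_right (hkey i) hgnn
      _ = g i * (ω ^ i * hSeq ω (i + 1)) := by rw [hg]; ring
  -- g has sum 1
  have hgsum : HasSum g 1 := by
    have h0 : HasSum (fun n : ℕ => ((n + 1 : ℕ) : ℝ) * α (n + 1)) 1 := by
      apply (hasSum_nat_add_iff (f := fun j : ℕ => (j : ℝ) * α j) 1).mpr
      simpa using hsum
    have he : g = fun n : ℕ => ((n + 1 : ℕ) : ℝ) * α (n + 1) := by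
      funext n; rw [hg]; push_cast; ring
    rw [he]; exact h0
  have hgsummable : Summable g := hgsum.summable
  have hsummable : Summable (termF ω α) :=
    Summable.of_nonneg_of_le hterm_nonneg hterm_le hgsummable
  -- find index with strict inequality
  have hexists : ∃ n : ℕ, 0 < α (n + 2) := by
    by_contra hcon
    push_neg at hcon
    have hzero : ∀ j : ℕ, j ≠ 1 → (j : ℝ) * α j = 0 := by
      intro j hj
      match j, hj with
      | 0, _ => simp
      | (n+2), _ =>
        have h1 : α (n + 2) ≤ 0 := hcon n
        have h2 : 0 ≤ α (n + 2) := hα (n + 2)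
        have : α (n + 2) = 0 := le_antisymm h1 h2
        simp [this]
    have h1 : HasSum (fun j : ℕ => (j : ℝ) * α j) (((1 : ℕ) : ℝ) * α 1) :=
      hasSum_single (f := fun j : ℕ => (j : ℝ) * α j) 1 hzero
    have := hsum.unique h1
    simp at this
    linarith
  obtain ⟨n, hn⟩ := hexists
  have hgpos : 0 < g (n + 1) := by
    rw [hg]
    exact mul_pos (by positivity) hn
  have hstrict : termF ω α (n + 1) < g (n + 1) := by
    rw [termF, div_lt_iff₀ (hD (n + 1))]
    show ((4 : ℝ) ^ (n+1))⁻¹ * (Nat.choose (2 * (n+1) + 1) (n+1) : ℝ) * g (n + 1)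
        < g (n + 1) * (ω ^ (n+1) * hSeq ω ((n + 1) + 1))
    rw [mul_comm (g (n + 1)) (ω ^ (n+1) * hSeq ω ((n + 1) + 1))]
    exact mul_lt_mul_of_pos_right (hkey' n) hgpos
  have htsum_lt : (∑' i : ℕ, termF ω α i) < 1 := by
    calc (∑' i : ℕ, termF ω α i) < ∑' i : ℕ, g i :=
          Summable.tsum_lt_tsum hterm_le hstrict hsummable hgsummable
      _ = 1 := hgsum.tsum_eq
  refine ⟨hsummable, htsum_lt, ?_⟩
  have : 0 < 1 - (∑' i : ℕ, termF ω α i) := by linarith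
  positivity
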